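/- arXiv:1211.4155 — 5 statements merged into one kernel-verified Lean document; each statement's English description precedes it below -/
import Mathlib

section
/- The curve t ↦ (α(t), β(t)), with α(t) = m^{1/p}(p+1)^{1/(2p)}/(cosh(pmt))^{1/p} and β = α', is a solution of the planar system a' = b, b' = m²a − a^{2p+1}, and it is homoclinic to the origin: (α(t), β(t)) → (0,0) as t → ±∞. -/
open Real Filter

/-- The homoclinic orbit of the Klein-Gordon ODE. -/
noncomputable def alph (m : ℝ) (p : ℕ) (t : ℝ) : ℝ :=
  m ^ ((1 : ℝ) / p) * ((p : ℝ) + 1) ^ ((1 : ℝ) / (2 * p)) /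
    (Real.cosh (p * m * t)) ^ ((1 : ℝ) / p)

lemma cosh_tendsto_atTop' : Tendsto Real.cosh atTop atTop := by
  apply tendsto_atTop_mono (fun x => ?_)
    (Tendsto.atTop_div_const two_pos Real.tendsto_exp_atTop)
  rw [Real.cosh_eq]
  have := Real.exp_pos (-x)
  linarith

lemma cosh_tendsto_atBot' : Tendsto Real.cosh atBot atTop := by
  have : Tendsto (fun x : ℝ => Real.cosh (-x)) atBot atTop :=
    cosh_tendsto_atTop'.comp tendsto_neg_atBot_atTop
  simpa [Real.cosh_neg] using this

lemma norm_bound_aux (C c q s x : ℝ) (hx : 0 < x) (hs : |s| ≤ x) :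
    ‖C * (s * c * q * x ^ (q - 1))‖ ≤ |C * c * q| * x ^ q := by
  have h1 : x ^ (q - 1) = x ^ q / x := by rw [Real.rpow_sub hx, Real.rpow_one]
  have h2 : C * (s * c * q * (x ^ q / x)) = C * c * q * (s / x) * x ^ q := by
    field_simp
  rw [Real.norm_eq_abs, h1, h2, abs_mul, abs_mul]
  have hxq : |x ^ q| = x ^ q := abs_of_pos (Real.rpow_pos_of_pos hx q)
  have h3 : |s / x| ≤ 1 := by
    rw [abs_div, abs_of_pos hx, div_le_one hx]; exact hs
  calc |C * c * q| * |s / x| * |x ^ q| ≤ |C * c * q| * 1 * |x ^ q| := by gcongr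
    _ = |C * c * q| * x ^ q := by rw [mul_one, hxq]

lemma abs_sinh_le_cosh (y : ℝ) : |Real.sinh y| ≤ Real.cosh y := by
  rw [Real.abs_sinh, ← Real.cosh_abs]
  exact (Real.sinh_lt_cosh _).le

theorem stmt_3 (m : ℝ) (hm : 0 < m) (p : ℕ) (hp : 1 ≤ p) :
    (∀ t : ℝ, HasDerivAt (alph m p) (deriv (alph m p) t) t) ∧
    (∀ t : ℝ, HasDerivAt (deriv (alph m p))
        (m ^ 2 * alph m p t - (alph m p t) ^ (2 * p + 1)) t) ∧
    Tendsto (fun t : ℝ => (alph m p t, deriv (alph m p) t)) atTop (nhds (0, 0)) ∧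
    Tendsto (fun t : ℝ => (alph m p t, deriv (alph m p) t)) atBot (nhds (0, 0)) := by
  have hp0 : (0:ℝ) < p := by exact_mod_cast Nat.lt_of_lt_of_le Nat.zero_lt_one hp
  have hpne : (p:ℝ) ≠ 0 := ne_of_gt hp0
  set q : ℝ := -(1/p) with hq
  set c : ℝ := p * m with hc
  have hcpos : 0 < c := mul_pos hp0 hm
  set C : ℝ := m ^ ((1:ℝ)/p) * ((p : ℝ) + 1) ^ ((1:ℝ)/(2*p)) with hC
  have hCpos : 0 < C :=
    mul_pos (Real.rpow_pos_of_pos hm _) (Real.rpow_pos_of_pos (by positivity) _)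
  clear_value q c C
  -- rewrite alph
  have halph : alph m p = fun t => C * (Real.cosh (c * t)) ^ q := by
    funext t
    rw [alph, hC, hc, hq, Real.rpow_neg (Real.cosh_pos _).le, div_eq_mul_inv]
  -- derivative of cosh (c t)
  have hD : ∀ t : ℝ, HasDerivAt (fun t => Real.cosh (c * t)) (Real.sinh (c * t) * c) t := by
    intro t
    have h1 : HasDerivAt (fun t : ℝ => c * t) c t := by
      simpa using (hasDerivAt_id t).const_mul c
    exact (Real.hasDerivAt_cosh (c * t)).comp t h1
  have hS : ∀ t : ℝ, HasDerivAt (fun t => Real.sinh (c * t)) (Real.cosh (c * t) * c) t := by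
    intro t
    have h1 : HasDerivAt (fun t : ℝ => c * t) c t := by
      simpa using (hasDerivAt_id t).const_mul c
    exact (Real.hasDerivAt_sinh (c * t)).comp t h1
  have hcne : ∀ t : ℝ, Real.cosh (c * t) ≠ 0 := fun t => (Real.cosh_pos _).ne'
  -- first derivative
  have hA : ∀ t : ℝ, HasDerivAt (alph m p)
      (C * (Real.sinh (c * t) * c * q * Real.cosh (c * t) ^ (q - 1))) t := by
    intro t
    rw [halph]
    exact ((hD t).rpow_const (Or.inl (hcne t))).const_mul C
  have hderiv : deriv (alph m p) =
      fun t => C * (Real.sinh (c * t) * c * q * Real.cosh (c * t) ^ (q - 1)) :=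
    funext fun t => (hA t).deriv
  refine ⟨fun t => (hA t).congr_deriv (by rw [hderiv]), ?_, ?_, ?_⟩
  · -- second derivative
    intro t
    rw [hderiv]
    have h2 : HasDerivAt (fun t => Real.cosh (c * t) ^ (q - 1))
        (Real.sinh (c * t) * c * (q - 1) * Real.cosh (c * t) ^ (q - 1 - 1)) t :=
      (hD t).rpow_const (Or.inl (hcne t))
    have h3 := (((hS t).mul h2).const_mul c).const_mul (C * q)
    have heq : (fun t => C * (Real.sinh (c * t) * c * q * Real.cosh (c * t) ^ (q - 1))) =
        fun t => (C * q) * (c * (Real.sinh (c * t) * Real.cosh (c * t) ^ (q - 1))) := by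
      funext t; ring
    rw [heq]
    refine (h3.congr_deriv ?_)
    symm
    -- algebraic identity
    set x := Real.cosh (c * t) with hx
    set s := Real.sinh (c * t) with hs
    have hxpos : (0:ℝ) < x := Real.cosh_pos _
    have hxne : x ≠ 0 := ne_of_gt hxpos
    have hs2 : s ^ 2 = x ^ 2 - 1 := Real.sinh_sq (c * t)
    have hx1 : x ^ (q - 1) = x ^ q / x := by
      rw [Real.rpow_sub hxpos, Real.rpow_one]
    have hx2 : x ^ (q - 1 - 1) = x ^ q / x / x := by
      rw [Real.rpow_sub hxpos, Real.rpow_sub hxpos, Real.rpow_one]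
    have halpht : alph m p t = C * x ^ q := by rw [halph]
    clear_value x s
    have hpow : (alph m p t) ^ (2 * p + 1) = C ^ (2 * p + 1) * (x ^ q / x / x) := by
      rw [halpht, mul_pow, ← Real.rpow_natCast (x ^ q) (2 * p + 1),
        ← Real.rpow_mul hxpos.le]
      congr 1
      rw [← hx2]
      congr 1
      push_cast [hq]
      field_simp
      ring
    have hCpow : C ^ (2 * p + 1) = C * m ^ 2 * ((p:ℝ) + 1) := by
      rw [hC, mul_pow, ← Real.rpow_natCast (m ^ ((1:ℝ)/p)) (2 * p + 1),
        ← Real.rpow_natCast (((p:ℝ) + 1) ^ ((1:ℝ)/(2*p))) (2 * p + 1),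
        ← Real.rpow_mul hm.le, ← Real.rpow_mul (by positivity : (0:ℝ) ≤ (p:ℝ) + 1)]
      have e1 : (1:ℝ)/p * (2 * p + 1 : ℕ) = (1:ℝ)/p + 2 := by
        push_cast; field_simp; ring
      have e2 : (1:ℝ)/(2*p) * (2 * p + 1 : ℕ) = (1:ℝ)/(2*p) + 1 := by
        push_cast; field_simp; ring
      rw [e1, e2, Real.rpow_add hm, Real.rpow_add (by positivity), Real.rpow_one,
        Real.rpow_two]
      ring
    have hcq2 : c ^ 2 * q ^ 2 = m ^ 2 := by
      rw [hc, hq]; field_simp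
    have hcq3 : c ^ 2 * q * (q - 1) = m ^ 2 * ((p:ℝ) + 1) := by
      rw [hc, hq]; field_simp; ring
    rw [hpow, hCpow, halpht, hx1, hx2]
    field_simp
    linear_combination (-(q * (q-1) * c^2)) * hs2 +
      (-(x^2)) * hcq2 + hcq3
  · -- atTop
    rw [hderiv]
    have hct : Tendsto (fun t : ℝ => c * t) atTop atTop :=
      tendsto_id.const_mul_atTop hcpos
    have hxq : Tendsto (fun t : ℝ => Real.cosh (c * t) ^ q) atTop (nhds 0) := by
      have := (tendsto_rpow_neg_atTop (y := 1/(p:ℝ)) (by positivity)).comp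
        (cosh_tendsto_atTop'.comp hct)
      simpa [Function.comp_def, hq] using this
    refine Tendsto.prodMk_nhds ?_ ?_
    · rw [halph]
      simpa using hxq.const_mul C
    · apply squeeze_zero_norm (a := fun t => |C * c * q| * Real.cosh (c * t) ^ q)
      · exact fun t => norm_bound_aux C c q _ _ (Real.cosh_pos _) (abs_sinh_le_cosh _)
      · simpa using hxq.const_mul (|C * c * q|)
  · -- atBot
    rw [hderiv]
    have hct : Tendsto (fun t : ℝ => c * t) atBot atBot :=
      tendsto_id.const_mul_atBot hcpos
    have hxq : Tendsto (fun t : ℝ => Real.cosh (c * t) ^ q) atBot (nhds 0) := by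
      have := (tendsto_rpow_neg_atTop (y := 1/(p:ℝ)) (by positivity)).comp
        (cosh_tendsto_atBot'.comp hct)
      simpa [Function.comp_def, hq] using this
    refine Tendsto.prodMk_nhds ?_ ?_
    · rw [halph]
      simpa using hxq.const_mul C
    · apply squeeze_zero_norm (a := fun t => |C * c * q| * Real.cosh (c * t) ^ q)
      · exact fun t => norm_bound_aux C c q _ _ (Real.cosh_pos _) (abs_sinh_le_cosh _)
      · simpa using hxq.const_mul (|C * c * q|)
end

section
/- Suppose q : ℝ → ℝ is continuous with ∫_ℝ |q(t)| dt < ∞, and α > 0. Then every solution (x,y) of the linear system x' = y, y' = (−α² + q(t))x is bounded on ℝ; more precisely there exists C > 0 depending only on q and α such that α²x(t)² + y(t)² ≤ C(α²x(0)² + y(0)²) for all t ∈ ℝ. -/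
open Real MeasureTheory

theorem stmt_6 (α : ℝ) (hα : 0 < α) (q : ℝ → ℝ) (hq : Continuous q)
    (hqint : Integrable q (volume : Measure ℝ)) :
    ∃ C > 0, ∀ x y : ℝ → ℝ,
      (∀ t, HasDerivAt x (y t) t) →
      (∀ t, HasDerivAt y ((-α ^ 2 + q t) * x t) t) →
      ∀ t : ℝ,
        α ^ 2 * (x t) ^ 2 + (y t) ^ 2 ≤ C * (α ^ 2 * (x 0) ^ 2 + (y 0) ^ 2) := by
  have hqabs : Integrable (fun t => |q t|) volume := hqint.abs
  set I : ℝ := ∫ t, |q t| with hIdef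
  refine ⟨Real.exp (I / α), Real.exp_pos _, ?_⟩
  intro x y hx hy t
  set E : ℝ → ℝ := fun t => α ^ 2 * (x t) ^ 2 + (y t) ^ 2 with hEdef
  have hEnn : ∀ t, 0 ≤ E t := fun t => by positivity
  set Q : ℝ → ℝ := fun t => (∫ s in (0:ℝ)..t, |q s|) / α with hQdef
  have hQd : ∀ t, HasDerivAt Q (|q t| / α) t := by
    intro t
    have h1 : HasDerivAt (fun u => ∫ s in (0:ℝ)..u, |q s|) (|q t|) t :=
      intervalIntegral.integral_hasDerivAt_right (hqabs.intervalIntegrable)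
        (hq.abs.stronglyMeasurable.stronglyMeasurableAtFilter) hq.abs.continuousAt
    exact h1.div_const α
  have hQ0 : Q 0 = 0 := by simp [hQdef]
  have hEd : ∀ t, HasDerivAt E (2 * q t * x t * y t) t := by
    intro t
    have h := (((hx t).pow 2).const_mul (α ^ 2)).add ((hy t).pow 2)
    exact h.congr_deriv (by ring)
  have key : ∀ t, |2 * q t * x t * y t| ≤ (|q t| / α) * E t := by
    intro t
    have h1 : |2 * q t * x t * y t| = |q t| * |2 * x t * y t| := by
      rw [← abs_mul]; ring_nf
    rw [h1]
    have h2 : |2 * x t * y t| ≤ (α ^ 2 * (x t) ^ 2 + (y t) ^ 2) / α := by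
      rw [le_div_iff₀ hα]
      rcases abs_cases (2 * x t * y t) with ⟨h, _⟩ | ⟨h, _⟩ <;> rw [h] <;>
        nlinarith [sq_nonneg (α * x t - y t), sq_nonneg (α * x t + y t)]
    calc |q t| * |2 * x t * y t| ≤ |q t| * ((α ^ 2 * (x t) ^ 2 + (y t) ^ 2) / α) :=
          mul_le_mul_of_nonneg_left h2 (abs_nonneg _)
      _ = (|q t| / α) * E t := by rw [hEdef]; ring
  -- G is antitone, H is monotone
  set G : ℝ → ℝ := fun t => E t * Real.exp (-Q t) with hGdef
  set H : ℝ → ℝ := fun t => E t * Real.exp (Q t) with hHdef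
  have hGd : ∀ t, HasDerivAt G
      ((2 * q t * x t * y t - (|q t| / α) * E t) * Real.exp (-Q t)) t := by
    intro t
    have h := (hEd t).mul ((hQd t).neg.exp)
    exact h.congr_deriv (by simp only [Pi.neg_apply]; ring)
  have hHd : ∀ t, HasDerivAt H
      ((2 * q t * x t * y t + (|q t| / α) * E t) * Real.exp (Q t)) t := by
    intro t
    have h := (hEd t).mul ((hQd t).exp)
    exact h.congr_deriv (by ring)
  have hGanti : Antitone G := by
    apply antitone_of_deriv_nonpos
    · exact fun s => (hGd s).differentiableAt
    · intro s
      rw [(hGd s).deriv]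
      have h1 : 2 * q s * x s * y s - (|q s| / α) * E s ≤ 0 := by
        have := (abs_le.1 (le_of_eq (rfl : |2 * q s * x s * y s| = _))).1
        have hk := key s
        have := neg_abs_le (2 * q s * x s * y s)
        nlinarith [le_abs_self (2 * q s * x s * y s)]
      exact mul_nonpos_of_nonpos_of_nonneg h1 (Real.exp_pos _).le
  have hHmono : Monotone H := by
    apply monotone_of_deriv_nonneg
    · exact fun s => (hHd s).differentiableAt
    · intro s
      rw [(hHd s).deriv]
      have h1 : 0 ≤ 2 * q s * x s * y s + (|q s| / α) * E s := by
        have hk := key s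
        nlinarith [neg_abs_le (2 * q s * x s * y s)]
      exact mul_nonneg h1 (Real.exp_pos _).le
  -- bound on Q
  have hQle : ∀ s, 0 ≤ s → Q s ≤ I / α := by
    intro s hs
    apply div_le_div_of_nonneg_right ?_ hα.le |>.trans_eq rfl
    rw [intervalIntegral.integral_of_le hs]
    calc ∫ u in Set.Ioc 0 s, |q u| ≤ ∫ u, |q u| :=
          setIntegral_le_integral hqabs (Filter.Eventually.of_forall fun u => abs_nonneg _)
      _ = I := rfl
  have hQge : ∀ s, s ≤ 0 → -Q s ≤ I / α := by
    intro s hs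
    have : -Q s = (∫ u in s..(0:ℝ), |q u|) / α := by
      rw [hQdef]
      simp [intervalIntegral.integral_symm s 0]
      ring
    rw [this]
    apply div_le_div_of_nonneg_right ?_ hα.le |>.trans_eq rfl
    rw [intervalIntegral.integral_of_le hs]
    calc ∫ u in Set.Ioc s 0, |q u| ≤ ∫ u, |q u| :=
          setIntegral_le_integral hqabs (Filter.Eventually.of_forall fun u => abs_nonneg _)
      _ = I := rfl
  show E t ≤ Real.exp (I / α) * E 0
  rcases le_total 0 t with ht | ht
  · have h1 : G t ≤ G 0 := hGanti ht
    have h2 : G 0 = E 0 := by simp [hGdef, hQ0]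
    have h3 : E t = G t * Real.exp (Q t) := by
      rw [hGdef]
      simp only [mul_assoc, ← Real.exp_add, neg_add_cancel, Real.exp_zero, mul_one]
    rw [h3]
    calc G t * Real.exp (Q t) ≤ E 0 * Real.exp (Q t) := by
          apply mul_le_mul_of_nonneg_right (h2 ▸ h1) (Real.exp_pos _).le
      _ ≤ E 0 * Real.exp (I / α) := by
          apply mul_le_mul_of_nonneg_left (Real.exp_le_exp.2 (hQle t ht)) (hEnn 0)
      _ = Real.exp (I / α) * E 0 := by ring
  · have h1 : H t ≤ H 0 := hHmono ht
    have h2 : H 0 = E 0 := by simp [hHdef, hQ0]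
    have h3 : E t = H t * Real.exp (-Q t) := by
      rw [hHdef]
      simp only [mul_assoc, ← Real.exp_add, add_neg_cancel, Real.exp_zero, mul_one]
    rw [h3]
    calc H t * Real.exp (-Q t) ≤ E 0 * Real.exp (-Q t) := by
          apply mul_le_mul_of_nonneg_right (h2 ▸ h1) (Real.exp_pos _).le
      _ ≤ E 0 * Real.exp (I / α) := by
          apply mul_le_mul_of_nonneg_left (Real.exp_le_exp.2 (hQge t ht)) (hEnn 0)
      _ = Real.exp (I / α) * E 0 := by ring
end

section
/- Let α be the homoclinic solution α(t) = m^{1/p}(p+1)^{1/(2p)}/(cosh(pmt))^{1/p}, let λ > m > 0, and consider the linear system a' = b, b' = −(λ² − m²)a − (2p+1)α(t)^{2p} a. Then every solution is bounded on ℝ: there is a constant C (depending on α, λ, m, p) with (λ²−m²)a(t)² + b(t)² ≤ C((λ²−m²)a(0)² + b(0)²) for all t. -/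
open Real

private lemma gron_step1 (X g E ex : ℝ) (h : X ≤ g * E) (hex : 0 < ex) :
    X * ex + E * (ex * -g) ≤ 0 := by nlinarith

private lemma gron_step2 (X g E ex : ℝ) (h : -(g * E) ≤ X) (hex : 0 < ex) :
    0 ≤ X * ex + E * (ex * g) := by nlinarith

theorem stmt_9 (m : ℝ) (hm : 0 < m) (p : ℕ) (hp : 1 ≤ p) (lam : ℝ) (hlam : m < lam) :
    ∃ C > 0, ∀ a b : ℝ → ℝ,
      (∀ t, HasDerivAt a (b t) t) →
      (∀ t, HasDerivAt b
        (-(lam ^ 2 - m ^ 2) * a t - (2 * p + 1) * (alph m p t) ^ (2 * p) * a t) t) →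
      ∀ t : ℝ,
        (lam ^ 2 - m ^ 2) * (a t) ^ 2 + (b t) ^ 2 ≤
          C * ((lam ^ 2 - m ^ 2) * (a 0) ^ 2 + (b 0) ^ 2) := by
  have hp0 : (p : ℝ) ≠ 0 := by positivity
  set c : ℝ := lam ^ 2 - m ^ 2 with hcdef
  have hc0 : 0 < c := by nlinarith
  set s : ℝ := Real.sqrt c with hsdef
  have hs : 0 < s := Real.sqrt_pos.mpr hc0
  have hs2 : s ^ 2 = c := Real.sq_sqrt hc0.le
  -- pointwise value of alph ^ (2p)
  have halph : ∀ t : ℝ, (alph m p t) ^ (2 * p)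
      = m ^ 2 * ((p : ℝ) + 1) / (Real.cosh (p * m * t)) ^ 2 := by
    intro t
    have hch : (0:ℝ) < Real.cosh (p * m * t) := Real.cosh_pos _
    unfold alph
    rw [div_pow, mul_pow,
      ← Real.rpow_natCast (m ^ ((1:ℝ)/p)) (2*p),
      ← Real.rpow_natCast (((p:ℝ)+1) ^ ((1:ℝ)/(2*p))) (2*p),
      ← Real.rpow_natCast ((Real.cosh (p*m*t)) ^ ((1:ℝ)/p)) (2*p),
      ← Real.rpow_mul hm.le, ← Real.rpow_mul (by positivity), ← Real.rpow_mul hch.le]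
    have h1 : (1:ℝ)/p * ((2*p : ℕ) : ℝ) = 2 := by
      push_cast; field_simp
    have h2 : (1:ℝ)/(2*p) * ((2*p : ℕ) : ℝ) = 1 := by
      push_cast; field_simp
    rw [h1, h2, Real.rpow_one, show (2:ℝ) = ((2:ℕ):ℝ) by norm_num,
      Real.rpow_natCast, Real.rpow_natCast]
  -- constant κ and the antiderivative G
  set κ : ℝ := 2 * (2*(p:ℝ)+1) * m * ((p:ℝ)+1) / (s * p) with hκ
  have hκ0 : 0 < κ := by positivity
  set G : ℝ → ℝ := fun t => κ * (Real.sinh (p*m*t) / Real.cosh (p*m*t)) with hG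
  have hGderiv : ∀ t : ℝ, HasDerivAt G
      (2 * ((2*(p:ℝ)+1) * m^2 * ((p:ℝ)+1) / (Real.cosh (p*m*t))^2) / s) t := by
    intro t
    have hch : (0:ℝ) < Real.cosh (p * m * t) := Real.cosh_pos _
    have hlin : HasDerivAt (fun t : ℝ => (p:ℝ) * m * t) ((p:ℝ)*m) t := by
      simpa using (hasDerivAt_id t).const_mul ((p:ℝ)*m)
    have hsinh : HasDerivAt (fun t : ℝ => Real.sinh (p*m*t))
        (Real.cosh (p*m*t) * ((p:ℝ)*m)) t := (Real.hasDerivAt_sinh _).comp t hlin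
    have hcosh : HasDerivAt (fun t : ℝ => Real.cosh (p*m*t))
        (Real.sinh (p*m*t) * ((p:ℝ)*m)) t := (Real.hasDerivAt_cosh _).comp t hlin
    have hdiv := (hsinh.div hcosh hch.ne').const_mul κ
    convert hdiv using 1
    · rfl
    · rfl
    · rfl
    have hid : Real.cosh (p*m*t) ^ 2 - Real.sinh (p*m*t) ^ 2 = 1 :=
      Real.cosh_sq_sub_sinh_sq _
    have hnum : Real.cosh (p*m*t) * ((p:ℝ)*m) * Real.cosh (p*m*t)
        - Real.sinh (p*m*t) * (Real.sinh (p*m*t) * ((p:ℝ)*m)) = (p:ℝ)*m := by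
      linear_combination ((p:ℝ)*m) * hid
    rw [hnum, hκ]
    field_simp
  -- |G| ≤ κ
  have hGbound : ∀ t : ℝ, |G t| ≤ κ := by
    intro t
    have hch : (0:ℝ) < Real.cosh (p * m * t) := Real.cosh_pos _
    have h1 : Real.cosh (p*m*t) ^ 2 = Real.sinh (p*m*t) ^ 2 + 1 := Real.cosh_sq _
    have htan : |Real.sinh (p*m*t) / Real.cosh (p*m*t)| ≤ 1 := by
      rw [abs_div, abs_of_pos hch, div_le_one hch]
      nlinarith [abs_nonneg (Real.sinh (p*m*t)), sq_abs (Real.sinh (p*m*t))]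
    calc |G t| = κ * |Real.sinh (p*m*t) / Real.cosh (p*m*t)| := by
            rw [hG]; simp [abs_mul, abs_of_pos hκ0]
      _ ≤ κ * 1 := by exact mul_le_mul_of_nonneg_left htan hκ0.le
      _ = κ := mul_one κ
  refine ⟨Real.exp (2 * κ), Real.exp_pos _, ?_⟩
  intro a b ha hb t
  set E : ℝ → ℝ := fun t => c * a t ^ 2 + b t ^ 2 with hE
  set g : ℝ → ℝ := fun t =>
    2 * ((2*(p:ℝ)+1) * m^2 * ((p:ℝ)+1) / (Real.cosh (p*m*t))^2) / s with hg
  have hg0 : ∀ t, 0 ≤ g t := by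
    intro t; have := Real.cosh_pos (p*m*t); positivity
  have hEderiv : ∀ t : ℝ, HasDerivAt E
      (-2 * ((2*(p:ℝ)+1) * (m ^ 2 * ((p:ℝ)+1) / (Real.cosh (p*m*t))^2)) * a t * b t) t := by
    intro t
    have h1 := ((ha t).pow 2).const_mul c
    have h2 := (hb t).pow 2
    have h3 := h1.add h2
    convert h3 using 1
    · rfl
    · rfl
    · rfl
    rw [halph t]
    push_cast
    ring
  -- |E'| <= g * E
  have hkey : ∀ t : ℝ,
      |(-2 * ((2*(p:ℝ)+1) * (m ^ 2 * ((p:ℝ)+1) / (Real.cosh (p*m*t))^2)) * a t * b t)|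
        ≤ g t * E t := by
    intro t
    have hch : (0:ℝ) < Real.cosh (p * m * t) := Real.cosh_pos _
    set V : ℝ := (2*(p:ℝ)+1) * (m ^ 2 * ((p:ℝ)+1) / (Real.cosh (p*m*t))^2) with hVdef
    have hV0 : 0 < V := by rw [hVdef]; positivity
    have heq : g t * E t = (2 * V * (s^2 * a t ^ 2 + b t ^ 2)) / s := by
      simp only [hg, hE]
      rw [hVdef, ← hs2]
      ring
    rw [heq, le_div_iff₀ hs]
    rcases abs_cases (-2 * V * a t * b t) with ⟨h, _⟩ | ⟨h, _⟩ <;> rw [h] <;>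
      nlinarith [mul_nonneg hV0.le (sq_nonneg (s * a t + b t)),
        mul_nonneg hV0.le (sq_nonneg (s * a t - b t)),
        mul_nonneg hV0.le (sq_nonneg (s * a t)), mul_nonneg hV0.le (sq_nonneg (b t))]
  -- monotone auxiliary functions
  set φ : ℝ → ℝ := fun u => E u * Real.exp (-G u) with hφdef
  set ψ : ℝ → ℝ := fun u => E u * Real.exp (G u) with hψdef
  have hφd : ∀ u : ℝ, HasDerivAt φ
      ((-2 * ((2*(p:ℝ)+1) * (m ^ 2 * ((p:ℝ)+1) / (Real.cosh (p*m*u))^2)) * a u * b u)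
        * Real.exp (-G u) + E u * (Real.exp (-G u) * -(g u))) u := by
    intro u
    exact (hEderiv u).mul ((hGderiv u).neg.exp)
  have hψd : ∀ u : ℝ, HasDerivAt ψ
      ((-2 * ((2*(p:ℝ)+1) * (m ^ 2 * ((p:ℝ)+1) / (Real.cosh (p*m*u))^2)) * a u * b u)
        * Real.exp (G u) + E u * (Real.exp (G u) * g u)) u := by
    intro u
    exact (hEderiv u).mul ((hGderiv u).exp)
  have hφanti : Antitone φ := by
    apply antitone_of_deriv_nonpos (fun u => (hφd u).differentiableAt)
    intro u
    rw [(hφd u).deriv]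
    have h2 := abs_le.mp (hkey u)
    have hex : (0:ℝ) < Real.exp (-G u) := Real.exp_pos _
    exact gron_step1 _ _ _ _ h2.2 hex
  have hψmono : Monotone ψ := by
    apply monotone_of_deriv_nonneg (fun u => (hψd u).differentiableAt)
    intro u
    rw [(hψd u).deriv]
    have h2 := abs_le.mp (hkey u)
    have hex : (0:ℝ) < Real.exp (G u) := Real.exp_pos _
    exact gron_step2 _ _ _ _ h2.1 hex
  have hG0 : G 0 = 0 := by simp [hG]
  have hE0 : 0 ≤ E 0 := by rw [hE]; positivity
  have hEt : E t ≤ Real.exp (2 * κ) * E 0 := by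
    rcases le_total 0 t with ht | ht
    · have h1 : φ t ≤ φ 0 := hφanti ht
      rw [hφdef] at h1
      simp only [hG0, neg_zero, Real.exp_zero, mul_one] at h1
      have h2 : E t = (E t * Real.exp (-G t)) * Real.exp (G t) := by
        rw [mul_assoc, ← Real.exp_add]; simp
      have h3 : Real.exp (G t) ≤ Real.exp (2 * κ) := by
        apply Real.exp_le_exp.mpr
        have := (abs_le.mp (hGbound t)).2
        linarith
      calc E t = (E t * Real.exp (-G t)) * Real.exp (G t) := h2
        _ ≤ E 0 * Real.exp (G t) := by
            apply mul_le_mul_of_nonneg_right h1 (Real.exp_pos _).le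
        _ ≤ E 0 * Real.exp (2 * κ) := mul_le_mul_of_nonneg_left h3 hE0
        _ = Real.exp (2 * κ) * E 0 := mul_comm _ _
    · have h1 : ψ t ≤ ψ 0 := hψmono ht
      rw [hψdef] at h1
      simp only [hG0, Real.exp_zero, mul_one] at h1
      have h2 : E t = (E t * Real.exp (G t)) * Real.exp (-G t) := by
        rw [mul_assoc, ← Real.exp_add]; simp
      have h3 : Real.exp (-G t) ≤ Real.exp (2 * κ) := by
        apply Real.exp_le_exp.mpr
        have := (abs_le.mp (hGbound t)).1
        linarith
      calc E t = (E t * Real.exp (G t)) * Real.exp (-G t) := h2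
        _ ≤ E 0 * Real.exp (-G t) := by
            apply mul_le_mul_of_nonneg_right h1 (Real.exp_pos _).le
        _ ≤ E 0 * Real.exp (2 * κ) := mul_le_mul_of_nonneg_left h3 hE0
        _ = Real.exp (2 * κ) * E 0 := mul_comm _ _
  exact hEt
end

section
/- Let α be the homoclinic orbit, λ > m > 0, and consider a' = b, b' = −(λ²−m²)a − (2p+1)α(t)^{2p}a. Let S(t) be the rotation flow of the unperturbed system (α ≡ 0), which preserves the norm |(x,y)|_λ = ((λ²−m²)x² + y²)^{1/2}. Then for every solution (a(t), b(t)) there exists (a⁺, b⁺) ∈ ℝ² such that |(a(t), b(t)) − S(t)(a⁺, b⁺)|_λ → 0 as t → +∞. -/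
open Real Filter MeasureTheory

/-- The flow `S(t)` of the unperturbed elliptic system `x' = y`, `y' = -ω² x`,
where `ω = √(λ² - m²)`. -/
noncomputable def ellFlow (ω t : ℝ) (v : ℝ × ℝ) : ℝ × ℝ :=
  (v.1 * Real.cos (ω * t) + v.2 * Real.sin (ω * t) / ω,
    -v.1 * ω * Real.sin (ω * t) + v.2 * Real.cos (ω * t))

lemma alph_pow (m : ℝ) (hm : 0 < m) (p : ℕ) (hp : 1 ≤ p) (t : ℝ) :
    alph m p t ^ (2 * p) = m ^ 2 * ((p : ℝ) + 1) / Real.cosh ((p : ℝ) * m * t) ^ 2 := by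
  have hp0 : (p : ℝ) ≠ 0 := Nat.cast_ne_zero.2 (by omega)
  have hc : 0 < Real.cosh ((p : ℝ) * m * t) := Real.cosh_pos _
  have hp1 : (0:ℝ) < (p : ℝ) + 1 := by positivity
  have h1 : (1:ℝ)/p * ((2*p : ℕ) : ℝ) = ((2:ℕ):ℝ) := by push_cast; field_simp
  have h2 : (1:ℝ)/(2*p) * ((2*p : ℕ) : ℝ) = ((1:ℕ):ℝ) := by push_cast; field_simp
  unfold alph
  rw [div_pow, mul_pow,
    ← Real.rpow_natCast (m ^ ((1:ℝ)/p)) (2*p),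
    ← Real.rpow_natCast (((p:ℝ)+1) ^ ((1:ℝ)/(2*p))) (2*p),
    ← Real.rpow_natCast (Real.cosh ((p:ℝ)*m*t) ^ ((1:ℝ)/p)) (2*p),
    ← Real.rpow_mul hm.le, ← Real.rpow_mul hp1.le, ← Real.rpow_mul hc.le,
    h1, h2, Real.rpow_natCast, Real.rpow_natCast, Real.rpow_natCast, pow_one]

lemma rotinv (ω : ℝ) (hω : ω ≠ 0) (c s a b ap bp : ℝ) (pyth : s^2 + c^2 = 1) :
    ω^2 * (a - (ap * c + bp * s / ω))^2 + (b - (-ap*ω*s + bp*c))^2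
    = ω^2 * ((a*c - b*s/ω) - ap)^2 + ((a*ω*s + b*c) - bp)^2 := by
  field_simp
  linear_combination (ω^2*(ap^2 - a^2) + (bp^2 - b^2)) * pyth

set_option maxHeartbeats 1000000 in
theorem stmt_10 (m : ℝ) (hm : 0 < m) (p : ℕ) (hp : 1 ≤ p) (lam : ℝ) (hlam : m < lam)
    (a b : ℝ → ℝ)
    (ha : ∀ t, HasDerivAt a (b t) t)
    (hb : ∀ t, HasDerivAt b
      (-(lam ^ 2 - m ^ 2) * a t - (2 * p + 1) * (alph m p t) ^ (2 * p) * a t) t) :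
    ∃ ap bp : ℝ,
      Tendsto (fun t : ℝ =>
          Real.sqrt ((lam ^ 2 - m ^ 2) *
              (a t - (ellFlow (Real.sqrt (lam ^ 2 - m ^ 2)) t (ap, bp)).1) ^ 2 +
            (b t - (ellFlow (Real.sqrt (lam ^ 2 - m ^ 2)) t (ap, bp)).2) ^ 2))
        atTop (nhds 0) := by
  have hlm : (0:ℝ) < lam ^ 2 - m ^ 2 := by nlinarith
  set ω : ℝ := Real.sqrt (lam ^ 2 - m ^ 2) with hωdef
  have hω : 0 < ω := Real.sqrt_pos.2 hlm
  have hω2 : ω ^ 2 = lam ^ 2 - m ^ 2 := Real.sq_sqrt hlm.le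
  have hωne : ω ≠ 0 := hω.ne'
  set pm : ℝ := (p : ℝ) * m with hpmdef
  have hpm : 0 < pm := by
    have : (1:ℝ) ≤ (p:ℝ) := by exact_mod_cast hp
    positivity
  set C : ℝ := (2 * (p:ℝ) + 1) * (m ^ 2 * ((p:ℝ) + 1)) with hCdef
  have hC : 0 < C := by positivity
  set g : ℝ → ℝ := fun t => C / Real.cosh (pm * t) ^ 2 with hgdef
  have hgpos : ∀ t, 0 < g t := fun t => by
    have := Real.cosh_pos (pm * t); positivity
  -- rewrite the ODE for b
  have hb' : ∀ t, HasDerivAt b (-(ω ^ 2) * a t - g t * a t) t := by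
    intro t
    convert hb t using 2
    · rw [hω2]
    · rw [alph_pow m hm p hp t, hgdef, hCdef, hpmdef]; ring
  -- derivative of g
  set dg : ℝ → ℝ := fun t =>
    -(C * (2 * Real.cosh (pm * t) ^ 1 * (Real.sinh (pm * t) * pm))) /
      (Real.cosh (pm * t) ^ 2) ^ 2 with hdgdef
  have hg' : ∀ t, HasDerivAt g (dg t) t := by
    intro t
    have h1 : HasDerivAt (fun t : ℝ => pm * t) pm t := by
      simpa using (hasDerivAt_id t).const_mul pm
    have h2 : HasDerivAt (fun t : ℝ => Real.cosh (pm * t)) (Real.sinh (pm * t) * pm) t :=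
      h1.cosh
    have h3 := h2.fun_pow 2
    have hne : Real.cosh (pm * t) ^ 2 ≠ 0 := by positivity
    have h4 := (hasDerivAt_const t C).fun_div h3 hne
    refine h4.congr_deriv ?_
    simp only [hdgdef]
    ring
  -- the energy function
  set F : ℝ → ℝ := fun t => ω ^ 2 * a t ^ 2 + b t ^ 2 + g t * a t ^ 2 with hFdef
  have hF' : ∀ t, HasDerivAt F (dg t * a t ^ 2) t := by
    intro t
    have h1 := (((ha t).fun_pow 2).const_mul (ω ^ 2)).fun_add ((hb' t).fun_pow 2) |>.fun_add
      ((hg' t).fun_mul ((ha t).fun_pow 2))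
    refine h1.congr_deriv ?_
    push_cast
    ring
  have hFanti : AntitoneOn F (Set.Ici (0:ℝ)) := by
    apply antitoneOn_of_deriv_nonpos (convex_Ici 0)
    · exact fun x _ => ((hF' x).differentiableAt.continuousAt).continuousWithinAt
    · exact fun x _ => (hF' x).differentiableAt.differentiableWithinAt
    · intro x hx
      rw [(hF' x).deriv]
      rw [interior_Ici] at hx
      have hsinh : 0 ≤ Real.sinh (pm * x) :=
        Real.sinh_nonneg_iff.2 (mul_nonneg hpm.le (le_of_lt (Set.mem_Ioi.1 hx)))
      have hcosh := Real.cosh_pos (pm * x)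
      have hnum : -(C * (2 * Real.cosh (pm * x) ^ 1 * (Real.sinh (pm * x) * pm))) ≤ 0 := by
        have : 0 ≤ C * (2 * Real.cosh (pm * x) ^ 1 * (Real.sinh (pm * x) * pm)) := by positivity
        linarith
      have hdg : dg x ≤ 0 := div_nonpos_iff.2 (Or.inr ⟨hnum, by positivity⟩)
      exact mul_nonpos_of_nonpos_of_nonneg hdg (sq_nonneg _)
  -- bound on a
  have hF0 : 0 ≤ F 0 := by
    have := (hgpos 0).le
    have := sq_nonneg (a 0); have := sq_nonneg (b 0)
    simp only [hFdef]; positivity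
  set A : ℝ := Real.sqrt (F 0) / ω with hAdef
  have hA0 : 0 ≤ A := by positivity
  have haA : ∀ t, 0 ≤ t → |a t| ≤ A := by
    intro t ht
    have h1 : ω ^ 2 * a t ^ 2 ≤ F t := by
      have := sq_nonneg (b t)
      have := mul_nonneg (hgpos t).le (sq_nonneg (a t))
      simp only [hFdef]; linarith
    have h2 : F t ≤ F 0 := hFanti Set.self_mem_Ici ht ht
    have h3 : a t ^ 2 ≤ A ^ 2 := by
      have hA2 : A ^ 2 = F 0 / ω ^ 2 := by
        rw [hAdef, div_pow, Real.sq_sqrt hF0]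
      rw [hA2, le_div_iff₀ (by positivity)]
      nlinarith
    calc |a t| = Real.sqrt (a t ^ 2) := (Real.sqrt_sq_eq_abs _).symm
      _ ≤ Real.sqrt (A ^ 2) := Real.sqrt_le_sqrt h3
      _ = A := Real.sqrt_sq hA0
  -- the rotated coordinates
  set P : ℝ → ℝ := fun t => a t * Real.cos (ω * t) - b t * Real.sin (ω * t) / ω with hPdef
  set Q : ℝ → ℝ := fun t => a t * ω * Real.sin (ω * t) + b t * Real.cos (ω * t) with hQdef
  have hωt : ∀ t : ℝ, HasDerivAt (fun t : ℝ => ω * t) ω t := fun t => by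
    simpa using (hasDerivAt_id t).const_mul ω
  have hcos : ∀ t : ℝ, HasDerivAt (fun t : ℝ => Real.cos (ω * t)) (-Real.sin (ω * t) * ω) t :=
    fun t => (hωt t).cos
  have hsin : ∀ t : ℝ, HasDerivAt (fun t : ℝ => Real.sin (ω * t)) (Real.cos (ω * t) * ω) t :=
    fun t => (hωt t).sin
  have hP' : ∀ t, HasDerivAt P (g t * a t * Real.sin (ω * t) / ω) t := by
    intro t
    have h1 := ((ha t).fun_mul (hcos t)).fun_sub (((hb' t).fun_mul (hsin t)).div_const ω)
    refine h1.congr_deriv ?_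
    field_simp
    ring
  have hQ' : ∀ t, HasDerivAt Q (-(g t * a t * Real.cos (ω * t))) t := by
    intro t
    have h1 := (((ha t).mul_const ω).fun_mul (hsin t)).fun_add ((hb' t).fun_mul (hcos t))
    refine h1.congr_deriv ?_
    ring
  -- continuity facts
  have hacont : Continuous a := by
    have : Differentiable ℝ a := fun t => (ha t).differentiableAt
    exact this.continuous
  have hgcont : Continuous g := by
    have h1 : Continuous fun t : ℝ => Real.cosh (pm * t) ^ 2 :=
      (Real.continuous_cosh.comp (continuous_const.mul continuous_id)).pow 2
    exact continuous_const.div h1 fun t => by positivity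
  have hPcont : Continuous fun t => g t * a t * Real.sin (ω * t) / ω :=
    ((hgcont.mul hacont).mul (Real.continuous_sin.comp
      (continuous_const.mul continuous_id))).div_const ω
  have hQcont : Continuous fun t => -(g t * a t * Real.cos (ω * t)) :=
    ((hgcont.mul hacont).mul (Real.continuous_cos.comp
      (continuous_const.mul continuous_id))).neg
  -- the dominating function
  set K : ℝ := 4 * C * A * (1 + 1 / ω) with hKdef
  have hK0 : 0 ≤ K := by positivity
  have hdom : IntegrableOn (fun s : ℝ => K * Real.exp (-(2 * pm) * s)) (Set.Ioi 0) := by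
    exact (exp_neg_integrableOn_Ioi 0 (by positivity)).const_mul K
  have hgbound : ∀ s : ℝ, 0 ≤ s → g s ≤ 4 * C * Real.exp (-(2 * pm) * s) := by
    intro s hs
    have hc : Real.exp (pm * s) / 2 ≤ Real.cosh (pm * s) := by
      rw [Real.cosh_eq]
      have := (Real.exp_pos (-(pm * s))).le
      linarith
    have hcpos := Real.cosh_pos (pm * s)
    have hepos := Real.exp_pos (pm * s)
    have h2 : Real.exp (pm * s) ^ 2 / 4 ≤ Real.cosh (pm * s) ^ 2 := by nlinarith
    have h3 : Real.exp (-(2 * pm) * s) * Real.exp (pm * s) ^ 2 = 1 := by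
      rw [sq, ← Real.exp_add, ← Real.exp_add,
        show -(2 * pm) * s + (pm * s + pm * s) = 0 by ring, Real.exp_zero]
    simp only [hgdef]
    rw [div_le_iff₀ (by positivity)]
    calc C = C * (Real.exp (-(2 * pm) * s) * Real.exp (pm * s) ^ 2) := by rw [h3]; ring
      _ ≤ 4 * C * Real.exp (-(2 * pm) * s) * Real.cosh (pm * s) ^ 2 := by
          nlinarith [mul_le_mul_of_nonneg_left h2
            (by positivity : (0:ℝ) ≤ 4 * C * Real.exp (-(2 * pm) * s))]
  have hK1 : 4 * C * A / ω ≤ K := by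
    rw [hKdef]
    have h4 : (0:ℝ) ≤ 4 * C * A / ω := by positivity
    have h5 : 4 * C * A * (1 + 1 / ω) = 4 * C * A + 4 * C * A / ω := by ring
    have h6 : (0:ℝ) ≤ 4 * C * A := by positivity
    rw [h5]; linarith
  have hK2 : 4 * C * A ≤ K := by
    rw [hKdef]
    have h4 : (0:ℝ) ≤ 4 * C * A / ω := by positivity
    have h5 : 4 * C * A * (1 + 1 / ω) = 4 * C * A + 4 * C * A / ω := by ring
    rw [h5]; linarith
  have hPbound : ∀ s : ℝ, s ∈ Set.Ioi (0:ℝ) →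
      ‖g s * a s * Real.sin (ω * s) / ω‖ ≤ K * Real.exp (-(2 * pm) * s) := by
    intro s hs
    have hs0 : (0:ℝ) ≤ s := (Set.mem_Ioi.1 hs).le
    have h1 := hgbound s hs0
    have h2 := haA s hs0
    have h3 : |Real.sin (ω * s)| ≤ 1 := Real.abs_sin_le_one _
    have hep := (Real.exp_pos (-(2 * pm) * s)).le
    calc ‖g s * a s * Real.sin (ω * s) / ω‖
        = g s * (|a s| * |Real.sin (ω * s)|) / ω := by
          rw [Real.norm_eq_abs, abs_div, abs_of_pos hω, abs_mul, abs_mul,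
            abs_of_pos (hgpos s)]
          ring
      _ ≤ (4 * C * Real.exp (-(2 * pm) * s)) * (A * 1) / ω := by
          gcongr
          all_goals first
            | exact h1 | exact h2 | exact h3
            | exact (abs_nonneg _).trans h2 | positivity
      _ = (4 * C * A / ω) * Real.exp (-(2 * pm) * s) := by ring
      _ ≤ K * Real.exp (-(2 * pm) * s) := mul_le_mul_of_nonneg_right hK1 hep
  have hQbound : ∀ s : ℝ, s ∈ Set.Ioi (0:ℝ) →
      ‖-(g s * a s * Real.cos (ω * s))‖ ≤ K * Real.exp (-(2 * pm) * s) := by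
    intro s hs
    have hs0 : (0:ℝ) ≤ s := (Set.mem_Ioi.1 hs).le
    have h1 := hgbound s hs0
    have h2 := haA s hs0
    have h3 : |Real.cos (ω * s)| ≤ 1 := Real.abs_cos_le_one _
    have hep := (Real.exp_pos (-(2 * pm) * s)).le
    calc ‖-(g s * a s * Real.cos (ω * s))‖
        = g s * (|a s| * |Real.cos (ω * s)|) := by
          rw [norm_neg, Real.norm_eq_abs, abs_mul, abs_mul, abs_of_pos (hgpos s)]
          ring
      _ ≤ (4 * C * Real.exp (-(2 * pm) * s)) * (A * 1) := by
          gcongr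
          all_goals first
            | exact h1 | exact h2 | exact h3
            | exact (abs_nonneg _).trans h2 | positivity
      _ = (4 * C * A) * Real.exp (-(2 * pm) * s) := by ring
      _ ≤ K * Real.exp (-(2 * pm) * s) := mul_le_mul_of_nonneg_right hK2 hep
  -- integrability
  have hPint : IntegrableOn (fun s => g s * a s * Real.sin (ω * s) / ω) (Set.Ioi 0) := by
    apply hdom.mono' (hPcont.aestronglyMeasurable.restrict)
    exact (ae_restrict_iff' measurableSet_Ioi).2 (ae_of_all _ hPbound)
  have hQint : IntegrableOn (fun s => -(g s * a s * Real.cos (ω * s))) (Set.Ioi 0) := by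
    apply hdom.mono' (hQcont.aestronglyMeasurable.restrict)
    exact (ae_restrict_iff' measurableSet_Ioi).2 (ae_of_all _ hQbound)
  -- limits of P and Q
  have hPeq : ∀ t : ℝ, P t = P 0 + ∫ s in (0:ℝ)..t, g s * a s * Real.sin (ω * s) / ω := by
    intro t
    have := intervalIntegral.integral_eq_sub_of_hasDerivAt
      (fun s _ => hP' s) (hPcont.intervalIntegrable 0 t)
    rw [this]; ring
  have hQeq : ∀ t : ℝ, Q t = Q 0 + ∫ s in (0:ℝ)..t, -(g s * a s * Real.cos (ω * s)) := by
    intro t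
    have := intervalIntegral.integral_eq_sub_of_hasDerivAt
      (fun s _ => hQ' s) (hQcont.intervalIntegrable 0 t)
    rw [this]; ring
  set ap : ℝ := P 0 + ∫ s in Set.Ioi (0:ℝ), g s * a s * Real.sin (ω * s) / ω with hapdef
  set bp : ℝ := Q 0 + ∫ s in Set.Ioi (0:ℝ), -(g s * a s * Real.cos (ω * s)) with hbpdef
  have hPlim : Tendsto P atTop (nhds ap) := by
    have h1 := MeasureTheory.intervalIntegral_tendsto_integral_Ioi 0 hPint tendsto_id
    have h2 := h1.const_add (P 0)
    apply h2.congr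
    intro t
    exact (hPeq t).symm
  have hQlim : Tendsto Q atTop (nhds bp) := by
    have h1 := MeasureTheory.intervalIntegral_tendsto_integral_Ioi 0 hQint tendsto_id
    have h2 := h1.const_add (Q 0)
    apply h2.congr
    intro t
    exact (hQeq t).symm
  refine ⟨ap, bp, ?_⟩
  -- rewrite the norm
  have hnorm : ∀ t : ℝ,
      (lam ^ 2 - m ^ 2) * (a t - (ellFlow ω t (ap, bp)).1) ^ 2 +
        (b t - (ellFlow ω t (ap, bp)).2) ^ 2
      = ω ^ 2 * (P t - ap) ^ 2 + (Q t - bp) ^ 2 := by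
    intro t
    have pyth : Real.sin (ω * t) ^ 2 + Real.cos (ω * t) ^ 2 = 1 :=
      Real.sin_sq_add_cos_sq _
    rw [← hω2]
    simp only [ellFlow, hPdef, hQdef]
    exact rotinv ω hωne (Real.cos (ω * t)) (Real.sin (ω * t)) (a t) (b t) ap bp
      (Real.sin_sq_add_cos_sq _)
  have hfinal : Tendsto (fun t => ω ^ 2 * (P t - ap) ^ 2 + (Q t - bp) ^ 2) atTop (nhds 0) := by
    have h1 : Tendsto (fun t => P t - ap) atTop (nhds 0) := by
      simpa using hPlim.sub_const ap
    have h2 : Tendsto (fun t => Q t - bp) atTop (nhds 0) := by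
      simpa using hQlim.sub_const bp
    have h3 := ((h1.pow 2).const_mul (ω ^ 2)).add (h2.pow 2)
    simpa using h3
  have := hfinal.sqrt
  rw [Real.sqrt_zero] at this
  apply this.congr
  intro t
  rw [hnorm t]
end

section
/- Let M be a compact Riemannian manifold, (λₖ²)_{k≥0} the nondecreasing sequence of eigenvalues of −Δ with λ₀ = 0, and 0 < m < λ₁. If g ∈ H¹(M) is a weak solution of −Δg − m²g + g^{2p+1} = 0 (p ≥ 1 integer, with appropriate Sobolev assumptions so that g^{2p+1} ∈ L²), then g is constant, hence g = 0 or g = ±m^{1/p}. -/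
open Real MeasureTheory

theorem zero_of_integral_zero {h : ℝ → ℝ} (hc : Continuous h) (hnn : ∀ x, 0 ≤ h x)
    {a b : ℝ} (hab : a < b) (hint : ∫ x in a..b, h x = 0) :
    ∀ x ∈ Set.Ioo a b, h x = 0 := by
  intro x hx
  by_contra hne
  have hpos : 0 < h x := lt_of_le_of_ne (hnn x) (Ne.symm hne)
  have hIntOn : IntegrableOn h (Set.Ioc a b) := hc.integrableOn_Ioc
  have h0 : ∫ y in Set.Ioc a b, h y = 0 := by
    rwa [intervalIntegral.integral_of_le hab.le] at hint
  have hae : h =ᵐ[volume.restrict (Set.Ioc a b)] 0 :=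
    (integral_eq_zero_iff_of_nonneg_ae (Filter.Eventually.of_forall hnn) hIntOn).mp h0
  have hae' : ∀ᵐ y ∂(volume : Measure ℝ), y ∈ Set.Ioc a b → h y = 0 :=
    (ae_restrict_iff' measurableSet_Ioc).mp hae
  have hnull : (volume : Measure ℝ) {y | ¬ (y ∈ Set.Ioc a b → h y = 0)} = 0 := hae'
  set Uo : Set ℝ := Set.Ioo a b ∩ h ⁻¹' (Set.Ioi 0) with hUo
  have hUopen : IsOpen Uo := isOpen_Ioo.inter (isOpen_Ioi.preimage hc)
  have hsub : Uo ⊆ {y | ¬ (y ∈ Set.Ioc a b → h y = 0)} := by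
    rintro y ⟨hy1, hy2⟩
    intro hcontra
    exact absurd (hcontra ⟨hy1.1, hy1.2.le⟩) (ne_of_gt hy2)
  have := hUopen.measure_pos (volume : Measure ℝ) ⟨x, hx, hpos⟩
  exact absurd (measure_mono_null hsub hnull) (ne_of_gt this)


theorem parseval_aux {T : ℝ} [hT : Fact (0 < T)] (F : C(AddCircle T, ℂ)) :
    ∑' n : ℤ, ‖fourierCoeff (⇑F) n‖^2 = (1/T) * ∫ x in (0:ℝ)..T, ‖F (x : AddCircle T)‖^2 := by
  have h1 := tsum_sq_fourierCoeff (ContinuousMap.toLp (E := ℂ) 2 AddCircle.haarAddCircle ℂ F)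
  simp only [fourierCoeff_toLp] at h1
  rw [h1]
  have h2 : ∫ t : AddCircle T, ‖(ContinuousMap.toLp (E := ℂ) 2 AddCircle.haarAddCircle ℂ F) t‖^2 ∂AddCircle.haarAddCircle
      = ∫ t : AddCircle T, ‖F t‖^2 ∂AddCircle.haarAddCircle := by
    apply integral_congr_ae
    filter_upwards [ContinuousMap.coeFn_toLp (p := 2) (μ := AddCircle.haarAddCircle) (𝕜 := ℂ) F] with t ht
    rw [ht]
  rw [h2]
  have h3 := AddCircle.intervalIntegral_preimage T 0 (fun t : AddCircle T => ‖F t‖^2)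
  simp only [zero_add] at h3
  rw [AddCircle.volume_eq_smul_haarAddCircle, integral_smul_measure,
    ENNReal.toReal_ofReal hT.out.le, smul_eq_mul] at h3
  rw [h3, ← mul_assoc, one_div, inv_mul_cancel₀ hT.out.ne', one_mul]

theorem fourier_summable_aux {T : ℝ} [hT : Fact (0 < T)] (F : C(AddCircle T, ℂ)) :
    Summable (fun n : ℤ => ‖fourierCoeff (⇑F) n‖^2) := by
  have hm := lp.memℓp (fourierBasis.repr (ContinuousMap.toLp (E := ℂ) 2 AddCircle.haarAddCircle ℂ F))
  have hs := hm.summable (by norm_num : 0 < (2:ENNReal).toReal)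
  simp only [fourierBasis_repr, fourierCoeff_toLp] at hs
  convert hs using 2 with n
  rw [show ((2:ENNReal).toReal) = ((2:ℕ):ℝ) by norm_num, Real.rpow_natCast]

theorem coeff_eq_on {T : ℝ} [hT : Fact (0 < T)] (F : C(AddCircle T, ℂ)) (fC : ℝ → ℂ)
    (hFx : ∀ x ∈ Set.Icc (0:ℝ) T, F (x : AddCircle T) = fC x) (n : ℤ) :
    fourierCoeff (⇑F) n = fourierCoeffOn hT.out fC n := by
  rw [fourierCoeff_eq_intervalIntegral (⇑F) n 0, fourierCoeffOn_eq_integral]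
  simp only [zero_add, sub_zero, smul_eq_mul, fourier_coe_apply]
  congr 1
  apply intervalIntegral.integral_congr
  intro x hx
  rw [Set.uIcc_of_le hT.out.le] at hx
  simp only [hFx x hx]

theorem coeff_rel {T : ℝ} [hT : Fact (0 < T)] (uC vC : ℝ → ℂ)
    (hdv : ∀ x, HasDerivAt uC (vC x) x) (hvc : Continuous vC)
    (hper : uC T = uC 0) {n : ℤ} (hn : n ≠ 0) :
    fourierCoeffOn hT.out uC n = (T : ℂ)/(2*π*Complex.I*n) * fourierCoeffOn hT.out vC n := by
  have h := fourierCoeffOn_of_hasDerivAt hT.out hn (fun x _ => hdv x)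
    (hvc.intervalIntegrable 0 T)
  rw [hper, sub_self, mul_zero, zero_sub] at h
  rw [h]
  have hπ : (π : ℂ) ≠ 0 := Complex.ofReal_ne_zero.mpr Real.pi_ne_zero
  have hnne : (n : ℂ) ≠ 0 := Int.cast_ne_zero.mpr hn
  field_simp
  simp

theorem coeff_zero {T : ℝ} [hT : Fact (0 < T)] (u : ℝ → ℝ)
    (hmean : ∫ x in (0:ℝ)..T, u x = 0) :
    fourierCoeffOn hT.out (fun x => (u x : ℂ)) 0 = 0 := by
  rw [fourierCoeffOn_eq_integral]
  simp only [neg_zero, fourier_zero, one_smul, sub_zero]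
  rw [intervalIntegral.integral_ofReal, hmean]
  simp

theorem norm_factor (T : ℝ) (hT : 0 < T) (n : ℤ) (hn : n ≠ 0) :
    ‖(T : ℂ)/(2*π*Complex.I*n)‖ ≤ T / (2*π) := by
  rw [norm_div]
  have h1 : ‖(T:ℂ)‖ = T := by
    rw [Complex.norm_real, Real.norm_of_nonneg hT.le]
  have h2 : ‖(2*π*Complex.I*(n:ℂ))‖ = 2*π*|(n:ℝ)| := by
    simp [norm_mul, Complex.norm_real, Complex.norm_I, abs_of_pos Real.pi_pos,
      Complex.norm_intCast, Int.norm_eq_abs]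
  rw [h1, h2]
  have hn1 : (1:ℝ) ≤ |(n:ℝ)| := by
    rw [← Int.cast_abs]
    exact_mod_cast Int.one_le_abs hn
  have h2π : (0:ℝ) < 2*π := by positivity
  exact div_le_div_of_nonneg_left hT.le h2π (by nlinarith)


theorem circle_facts {T : ℝ} [hT : Fact (0 < T)] (fC : ℝ → ℂ) (hc : Continuous fC)
    (hTeq : fC 0 = fC T) :
    Summable (fun n : ℤ => ‖fourierCoeffOn hT.out fC n‖^2) ∧
    ∑' n : ℤ, ‖fourierCoeffOn hT.out fC n‖^2 = (1/T) * ∫ x in (0:ℝ)..T, ‖fC x‖^2 := by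
  have hL := hT.out
  set F : C(AddCircle T, ℂ) :=
    ⟨AddCircle.liftIco T 0 fC, AddCircle.liftIco_zero_continuous hTeq hc.continuousOn⟩ with hF
  have hcoeT : ((T : ℝ) : AddCircle T) = ((0:ℝ) : AddCircle T) := by
    rw [AddCircle.coe_period]; norm_cast
  have hFx : ∀ x ∈ Set.Icc (0:ℝ) T, F (x : AddCircle T) = fC x := by
    intro x hx
    show AddCircle.liftIco T 0 fC ((x : ℝ) : AddCircle T) = fC x
    rcases lt_or_eq_of_le hx.2 with h | h
    · exact AddCircle.liftIco_zero_coe_apply ⟨hx.1, h⟩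
    · rw [h, hcoeT, AddCircle.liftIco_zero_coe_apply ⟨le_refl (0:ℝ), hL⟩, hTeq]
  have he : ∀ n, fourierCoeff (⇑F) n = fourierCoeffOn hT.out fC n := coeff_eq_on F fC hFx
  constructor
  · have := fourier_summable_aux F
    simpa only [he] using this
  · rw [← tsum_congr (fun n => congrArg (fun z => ‖z‖^2) (he n))]
    rw [parseval_aux F]
    congr 1
    apply intervalIntegral.integral_congr
    intro x hx
    rw [Set.uIcc_of_le hL.le] at hx
    show ‖F ↑x‖^2 = ‖fC x‖^2
    rw [hFx x hx]

theorem wirtinger {L : ℝ} (hL : 0 < L) (u v : ℝ → ℝ) (hu : Continuous u) (hv : Continuous v)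
    (huv : ∀ x, HasDerivAt u (v x) x) (hup : Function.Periodic u L)
    (hmean : ∫ x in (0:ℝ)..L, u x = 0) :
    (∫ x in (0:ℝ)..L, (u x)^2) ≤ (L/(2*π))^2 * ∫ x in (0:ℝ)..L, (v x)^2 := by
  haveI hF : Fact (0 < L) := ⟨hL⟩
  have hvp : Function.Periodic v L := by
    intro x
    have h1 : HasDerivAt (fun y => u (y + L)) (v (x + L)) x :=
      HasDerivAt.comp_add_const x L (huv (x + L))
    rw [funext hup] at h1
    exact h1.unique (huv x)
  set uC : ℝ → ℂ := fun x => (u x : ℂ) with huCdef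
  set vC : ℝ → ℂ := fun x => (v x : ℂ) with hvCdef
  have hucont : Continuous uC := Complex.continuous_ofReal.comp hu
  have hvcont : Continuous vC := Complex.continuous_ofReal.comp hv
  have huT : uC 0 = uC L := by
    simp only [huCdef, Complex.ofReal_inj]
    simpa using (hup 0).symm
  have hvT : vC 0 = vC L := by
    simp only [hvCdef, Complex.ofReal_inj]
    simpa using (hvp 0).symm
  obtain ⟨hSu, hPU⟩ := circle_facts uC hucont huT
  obtain ⟨hSv, hPV⟩ := circle_facts vC hvcont hvT
  have hnormu : ∀ x : ℝ, ‖uC x‖^2 = (u x)^2 := by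
    intro x; rw [huCdef]; simp [Complex.norm_real, sq_abs]
  have hnormv : ∀ x : ℝ, ‖vC x‖^2 = (v x)^2 := by
    intro x; rw [hvCdef]; simp [Complex.norm_real, sq_abs]
  rw [intervalIntegral.integral_congr (g := fun x => ‖uC x‖^2) (fun x _ => (hnormu x).symm)]
  rw [intervalIntegral.integral_congr (g := fun x => ‖vC x‖^2) (fun x _ => (hnormv x).symm)]
  have hterm : ∀ n : ℤ, ‖fourierCoeffOn hF.out uC n‖^2
      ≤ (L/(2*π))^2 * ‖fourierCoeffOn hF.out vC n‖^2 := by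
    intro n
    by_cases hn : n = 0
    · subst hn
      rw [show fourierCoeffOn hF.out uC 0 = 0 from coeff_zero u hmean]
      simp only [norm_zero]
      rw [show (0:ℝ)^2 = 0 by norm_num]
      positivity
    · have hrel := coeff_rel uC vC (fun x => (huv x).ofReal_comp) hvcont huT.symm hn
      rw [hrel, norm_mul]
      have hnf := norm_factor L hL n hn
      have h1 : ‖(L : ℂ)/(2*π*Complex.I*n)‖ * ‖fourierCoeffOn hF.out vC n‖
          ≤ (L/(2*π)) * ‖fourierCoeffOn hF.out vC n‖ :=
        mul_le_mul_of_nonneg_right hnf (norm_nonneg _)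
      calc (‖(L : ℂ)/(2*π*Complex.I*n)‖ * ‖fourierCoeffOn hF.out vC n‖)^2
          ≤ ((L/(2*π)) * ‖fourierCoeffOn hF.out vC n‖)^2 :=
            pow_le_pow_left₀ (by positivity) h1 2
        _ = (L/(2*π))^2 * ‖fourierCoeffOn hF.out vC n‖^2 := by ring
  have hsum : ∑' n : ℤ, ‖fourierCoeffOn hF.out uC n‖^2
      ≤ ∑' n : ℤ, (L/(2*π))^2 * ‖fourierCoeffOn hF.out vC n‖^2 :=
    Summable.tsum_le_tsum hterm hSu (hSv.mul_left _)
  rw [tsum_mul_left, hPU, hPV] at hsum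
  calc (∫ x in (0:ℝ)..L, ‖uC x‖^2) = L * ((1/L) * ∫ x in (0:ℝ)..L, ‖uC x‖^2) := by
        field_simp
    _ ≤ L * ((L/(2*π))^2 * ((1/L) * ∫ x in (0:ℝ)..L, ‖vC x‖^2)) :=
        mul_le_mul_of_nonneg_left hsum hL.le
    _ = (L/(2*π))^2 * ∫ x in (0:ℝ)..L, ‖vC x‖^2 := by
        field_simp

/-- Stationary solutions of the Klein-Gordon equation on a compact one-dimensional manifold
(a circle of circumference `L`, whose Laplacian has eigenvalues `(2πk/L)²`, so that
`λ₁ = 2π/L`): if `0 < m < λ₁` then any solution `g` of `-Δg - m²g + g^(2p+1) = 0` is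
constant, equal to `0` or `±m^(1/p)`. -/
theorem stmt_15 (L : ℝ) (hL : 0 < L) (m : ℝ) (hm : 0 < m) (hm1 : m < 2 * π / L)
    (p : ℕ) (hp : 1 ≤ p) (g : ℝ → ℝ) (hg : ContDiff ℝ 2 g) (hper : Function.Periodic g L)
    (heq : ∀ x : ℝ, -(deriv (deriv g) x) - m ^ 2 * g x + (g x) ^ (2 * p + 1) = 0) :
    ∃ c : ℝ, (∀ x : ℝ, g x = c) ∧
      (c = 0 ∨ c = m ^ ((1 : ℝ) / p) ∨ c = -(m ^ ((1 : ℝ) / p))) := by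
  have hgc : Continuous g := hg.continuous
  have h2 : ContDiff ℝ ((1:ℕ)+1) g := by exact_mod_cast hg
  rw [contDiff_succ_iff_deriv] at h2
  have hdiff : Differentiable ℝ g := h2.1
  have hd1 : ContDiff ℝ 1 (deriv g) := by exact_mod_cast h2.2.2
  have hdiff' : Differentiable ℝ (deriv g) := hd1.differentiable one_ne_zero
  have hcont_g' : Continuous (deriv g) := hdiff'.continuous
  set dd := deriv (deriv g) with hdd_def
  have hcont_dd : Continuous dd := hd1.continuous_deriv le_rfl
  have hdd : ∀ x, HasDerivAt (deriv g) (dd x) x := fun x => (hdiff' x).hasDerivAt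
  have hgd : ∀ x, HasDerivAt g (deriv g x) x := fun x => (hdiff x).hasDerivAt
  have heq' : ∀ x, dd x = g x ^ (2*p+1) - m^2 * g x := fun x => by have := heq x; linarith
  have hdper : Function.Periodic (deriv g) L := by
    intro x
    have h1 : (fun y => g (y + L)) = g := funext hper
    have h2' : deriv (fun y => g (y + L)) x = deriv g (x + L) := deriv_comp_add_const g L x
    rw [h1] at h2'
    exact h2'.symm
  have hgLeq : g L = g 0 := by simpa using hper 0
  have hdLeq : deriv g L = deriv g 0 := by simpa using hdper 0
  have hmean : ∫ x in (0:ℝ)..L, deriv g x = 0 := by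
    rw [intervalIntegral.integral_deriv_eq_sub (fun x _ => hdiff x)
      (hcont_g'.intervalIntegrable 0 L), hgLeq, sub_self]
  -- continuity of integrands
  have c1 : Continuous fun x => (deriv g x)^2 := hcont_g'.pow 2
  have c2 : Continuous fun x => g x * dd x := hgc.mul hcont_dd
  have c3 : Continuous fun x => g x ^(2*p) * (deriv g x)^2 := (hgc.pow _).mul c1
  have c4 : Continuous fun x => g x ^(2*p+1) * dd x := (hgc.pow _).mul hcont_dd
  -- integration by parts identities
  have hD1 : ∀ x : ℝ, HasDerivAt (fun y => g y * deriv g y)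
      ((deriv g x)^2 + g x * dd x) x := by
    intro x
    have h : HasDerivAt (fun y => g y * deriv g y) (deriv g x * deriv g x + g x * dd x) x :=
      (hgd x).mul (hdd x)
    convert h using 1
    ring
  have hI1 : ∫ x in (0:ℝ)..L, ((deriv g x)^2 + g x * dd x) = 0 := by
    rw [intervalIntegral.integral_eq_sub_of_hasDerivAt (fun x _ => hD1 x)
      ((c1.add c2).intervalIntegrable 0 L), hgLeq, hdLeq, sub_self]
  have hD2 : ∀ x : ℝ, HasDerivAt (fun y => g y ^(2*p+1) * deriv g y)
      ((2*p+1 : ℝ) * (g x ^(2*p) * (deriv g x)^2) + g x ^(2*p+1) * dd x) x := by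
    intro x
    have h : HasDerivAt (fun y => g y ^(2*p+1) * deriv g y)
        (((2*p+1 : ℕ) : ℝ) * g x ^ (2*p+1-1) * deriv g x * deriv g x + g x ^(2*p+1) * dd x) x :=
      ((hgd x).pow (2*p+1)).mul (hdd x)
    convert h using 1
    simp only [Nat.add_sub_cancel]
    push_cast
    ring
  have hI2 : ∫ x in (0:ℝ)..L,
      ((2*p+1 : ℝ) * (g x ^(2*p) * (deriv g x)^2) + g x ^(2*p+1) * dd x) = 0 := by
    rw [intervalIntegral.integral_eq_sub_of_hasDerivAt (fun x _ => hD2 x)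
      (((continuous_const.mul c3).add c4).intervalIntegrable 0 L), hgLeq, hdLeq, sub_self]
  set B := ∫ x in (0:ℝ)..L, (deriv g x)^2 with hB
  set Cc := ∫ x in (0:ℝ)..L, g x ^(2*p) * (deriv g x)^2 with hCc
  have hsplit1 : B + (∫ x in (0:ℝ)..L, g x * dd x) = 0 := by
    rw [hB, ← intervalIntegral.integral_add (c1.intervalIntegrable 0 L)
      (c2.intervalIntegrable 0 L)]
    exact hI1
  have hsplit2 : (2*p+1 : ℝ) * Cc + (∫ x in (0:ℝ)..L, g x ^(2*p+1) * dd x) = 0 := by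
    rw [hCc, ← intervalIntegral.integral_const_mul,
      ← intervalIntegral.integral_add ((show Continuous fun x =>
        (2*p+1 : ℝ) * (g x ^(2*p) * (deriv g x)^2) from continuous_const.mul c3).intervalIntegrable 0 L)
      (c4.intervalIntegrable 0 L)]
    exact hI2
  have hApt : ∀ x : ℝ, (dd x)^2 = g x ^(2*p+1) * dd x - m^2 * (g x * dd x) := by
    intro x
    nth_rewrite 1 [sq]
    nth_rewrite 2 [heq' x]
    ring
  have hAe : (∫ x in (0:ℝ)..L, (dd x)^2)
      = (∫ x in (0:ℝ)..L, g x ^(2*p+1) * dd x) - m^2 * ∫ x in (0:ℝ)..L, g x * dd x := by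
    rw [intervalIntegral.integral_congr (g := fun x => g x ^(2*p+1) * dd x - m^2 * (g x * dd x))
      (fun x _ => hApt x),
      intervalIntegral.integral_sub (c4.intervalIntegrable 0 L)
      ((show Continuous fun x => m^2 * (g x * dd x) from continuous_const.mul c2).intervalIntegrable 0 L),
      intervalIntegral.integral_const_mul]
  have hCpos : 0 ≤ Cc := by
    rw [hCc]
    exact intervalIntegral.integral_nonneg hL.le
      (fun x _ => mul_nonneg ((even_two_mul p).pow_nonneg _) (sq_nonneg _))
  have hAleq : (∫ x in (0:ℝ)..L, (dd x)^2) ≤ m^2 * B := by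
    have hmul : 0 ≤ (2*p+1 : ℝ) * Cc := mul_nonneg (by have := Nat.cast_nonneg (α := ℝ) p; linarith) hCpos
    nlinarith [hAe, hsplit1, hsplit2]
  have hW := wirtinger hL (deriv g) dd hcont_g' hcont_dd hdd hdper hmean
  have hApos : 0 ≤ ∫ x in (0:ℝ)..L, (dd x)^2 :=
    intervalIntegral.integral_nonneg hL.le (fun x _ => sq_nonneg _)
  have hBpos : 0 ≤ B := by
    rw [hB]; exact intervalIntegral.integral_nonneg hL.le (fun x _ => sq_nonneg _)
  have hπ := Real.pi_pos
  have hmL : m * L < 2*π := by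
    rw [lt_div_iff₀ hL] at hm1; linarith
  have hkm : (L/(2*π))^2 * m^2 < 1 := by
    rw [div_pow, div_mul_eq_mul_div, div_lt_one (by positivity)]
    nlinarith [mul_pos (sub_pos.mpr hmL) (by positivity : (0:ℝ) < 2*π + m*L)]
  have hchain : B ≤ ((L/(2*π))^2 * m^2) * B := by
    calc B ≤ (L/(2*π))^2 * ∫ x in (0:ℝ)..L, (dd x)^2 := hW
      _ ≤ (L/(2*π))^2 * (m^2 * B) := mul_le_mul_of_nonneg_left hAleq (by positivity)
      _ = ((L/(2*π))^2 * m^2) * B := by ring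
  have hB0 : B = 0 := by nlinarith [hchain, hkm, hBpos]
  -- derivative vanishes
  have hz1 := zero_of_integral_zero c1 (fun x => sq_nonneg _) hL (hB ▸ hB0)
  have hper2 : Function.Periodic (fun x => (deriv g x)^2) L := fun x => by
    simp [hdper x]
  have hneg : -(L/2) < -(L/2) + L := by linarith
  have hshift : ∫ x in (-(L/2))..(-(L/2)+L), (deriv g x)^2 = 0 := by
    rw [hper2.intervalIntegral_add_eq (-(L/2)) 0, zero_add, ← hB]
    exact hB0
  have hz2 := zero_of_integral_zero c1 (fun x => sq_nonneg _) hneg hshift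
  have hzero : ∀ x, deriv g x = 0 := by
    intro x
    obtain ⟨y, hy, hxy⟩ := hdper.exists_mem_Ico₀ hL x
    rw [hxy]
    rcases eq_or_lt_of_le hy.1 with h0 | h0
    · have h00 : (deriv g y)^2 = 0 := hz2 y ⟨by linarith [hy.2], by linarith [hy.2]⟩
      exact sq_eq_zero_iff.mp h00
    · exact sq_eq_zero_iff.mp (hz1 y ⟨h0, hy.2⟩)
  have hconst : ∀ x, g x = g 0 := fun x => is_const_of_deriv_eq_zero hdiff hzero x 0
  have hdd0 : dd 0 = 0 := by
    have hd : deriv g = fun _ => (0:ℝ) := funext hzero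
    rw [hdd_def, hd]
    simp
  have hceq : (g 0)^(2*p+1) = m^2 * g 0 := by
    have h := heq 0
    rw [hdd0] at h
    linarith
  refine ⟨g 0, fun x => hconst x, ?_⟩
  by_cases hc0 : g 0 = 0
  · exact Or.inl hc0
  · have hc2p : (g 0)^(2*p) = m^2 := by
      have h1 : (g 0)^(2*p) * g 0 = m^2 * g 0 := by
        rw [← pow_succ]; exact hceq
      exact mul_right_cancel₀ hc0 h1
    have hd2p : (m ^ ((1:ℝ)/p))^(2*p) = m^2 := by
      have hppos : (p:ℝ) ≠ 0 := Nat.cast_ne_zero.mpr (by omega)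
      rw [← Real.rpow_natCast (m ^ ((1:ℝ)/p)) (2*p), ← Real.rpow_mul hm.le,
        show ((1:ℝ)/p) * ((2*p : ℕ):ℝ) = 2 by push_cast; field_simp,
        show (2:ℝ) = ((2:ℕ):ℝ) by norm_num, Real.rpow_natCast]
    have habs : |g 0| ^(2*p) = (m ^ ((1:ℝ)/p))^(2*p) := by
      rw [pow_abs, hc2p, abs_of_pos (by positivity : (0:ℝ) < m^2), hd2p]
    have hdpos : 0 < m ^ ((1:ℝ)/p) := Real.rpow_pos_of_pos hm _
    have habs' : |g 0| = m ^ ((1:ℝ)/p) := by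
      rcases lt_trichotomy (|g 0|) (m ^ ((1:ℝ)/p)) with h | h | h
      · have hlt := pow_lt_pow_left₀ h (abs_nonneg _) (by omega : 2*p ≠ 0)
        rw [habs] at hlt
        exact absurd hlt (lt_irrefl _)
      · exact h
      · have hlt := pow_lt_pow_left₀ h hdpos.le (by omega : 2*p ≠ 0)
        rw [← habs] at hlt
        exact absurd hlt (lt_irrefl _)
    rcases (abs_eq hdpos.le).mp habs' with h | h
    · exact Or.inr (Or.inl h)
    · exact Or.inr (Or.inr h)
end
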